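/- Let V be a complex inner product space, 𝒱 a finite vertex set, R a finite index set, (e₀ʳ, e₁ʳ)_{r∈R} pairs of oriented edges with vertexes in 𝒱 (an oriented edge e is an ordered pair of vertexes, with origin ė and target ë), and M_r ∈ ℝ. Let U assign to each ordered pair of vertexes (j,i) a unitary operator U_{ji} on V with U_{ij} = U_{ji}^{-1} and U_{ii} = id, write U_e = U_{ë ė}, and let Φ assign a vector Φ_i ∈ V to each vertex i. Define S'(U,Φ) = Σ_{r∈R} M_r · Re⟨ U_{ë₁ʳ ë₀ʳ}(Φ_{ë₀ʳ} − U_{e₀ʳ} Φ_{ė₀ʳ}) , Φ_{ë₁ʳ} − U_{e₁ʳ} Φ_{ė₁ʳ} ⟩. Then for every family (G_i)_{i∈𝒱} of unitary operators on V, setting U'_{ji} = G_j U_{ji} G_i^{-1} and Φ'_i = G_i Φ_i, one has S'(U',Φ') = S'(U,Φ). -/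

import Mathlib

open scoped InnerProductSpace

/-- The discrete action for scalar fields coupled to a lattice gauge field:
`S'(U,Φ) = Σ_r M_r · Re⟨ U_{ë₁ʳ ë₀ʳ}(Φ_{ë₀ʳ} − U_{e₀ʳ} Φ_{ė₀ʳ}) , Φ_{ë₁ʳ} − U_{e₁ʳ} Φ_{ė₁ʳ} ⟩`,
where an oriented edge `e` is an ordered pair `(ė, ë)` (origin, target), and `U_e = U_{ë ė}`. -/
noncomputable def discreteScalarAction {V : Type*} [NormedAddCommGroup V]
    [InnerProductSpace ℂ V] {𝒱 R : Type*} [Fintype R]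
    (e₀ e₁ : R → 𝒱 × 𝒱) (M : R → ℝ)
    (U : 𝒱 → 𝒱 → (V ≃ₗᵢ[ℂ] V)) (Φ : 𝒱 → V) : ℝ :=
  ∑ r : R, M r *
    (⟪U ((e₁ r).2) ((e₀ r).2) (Φ ((e₀ r).2) - U ((e₀ r).2) ((e₀ r).1) (Φ ((e₀ r).1))),
      Φ ((e₁ r).2) - U ((e₁ r).2) ((e₁ r).1) (Φ ((e₁ r).1))⟫_ℂ).re

/-- Discrete gauge invariance of the scalar field action: if the parallel transports `U`
are unitary operators with `U_{ij} = U_{ji}⁻¹` and `U_{ii} = id`, then for any family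
`(G_i)` of unitary operators, replacing `U_{ji}` by `G_j U_{ji} G_i⁻¹` and `Φ_i` by
`G_i Φ_i` leaves the action unchanged. -/
theorem discreteScalarAction_gauge_invariant {V : Type*} [NormedAddCommGroup V]
    [InnerProductSpace ℂ V] {𝒱 R : Type*} [Fintype R]
    (e₀ e₁ : R → 𝒱 × 𝒱) (M : R → ℝ)
    (U : 𝒱 → 𝒱 → (V ≃ₗᵢ[ℂ] V))
    (hUinv : ∀ i j : 𝒱, U i j = (U j i)⁻¹)
    (hUone : ∀ i : 𝒱, U i i = 1)
    (Φ : 𝒱 → V) (G : 𝒱 → (V ≃ₗᵢ[ℂ] V)) :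
    discreteScalarAction e₀ e₁ M (fun j i => G j * U j i * (G i)⁻¹)
        (fun i => G i (Φ i)) =
      discreteScalarAction e₀ e₁ M U Φ := by
  unfold discreteScalarAction
  refine Finset.sum_congr rfl fun r _ => ?_
  simp [LinearIsometryEquiv.coe_mul, LinearIsometryEquiv.coe_inv,
    map_sub]
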